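/- Let X, Y ⊆ S_n be subsets such that the multiplication map X × Y → S_n is a length-additive bijection, and let J ⊆ {1,…,n−1}. Let W_J be the subgroup of S_n generated by the adjacent transpositions s_i = (i, i+1) for i ∈ J. Then the multiplication map (X ∩ W_J) × (Y ∩ W_J) → W_J is a bijection onto W_J and is length-additive (with respect to the length function ℓ of S_n). -/

import Mathlib

namespace SepPaper

/-- Number of inversions of a permutation of `Fin n`, i.e. its Coxeter length. -/
def invLen {n : ℕ} (w : Equiv.Perm (Fin n)) : ℕ :=
  (Finset.univ.filter fun p : Fin n × Fin n => p.1 < p.2 ∧ w p.2 < w p.1).card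

/-- Right weak order. -/
def leR {n : ℕ} (v u : Equiv.Perm (Fin n)) : Prop :=
  invLen v + invLen (v⁻¹ * u) = invLen u

/-- Left weak order. -/
def leL {n : ℕ} (v u : Equiv.Perm (Fin n)) : Prop :=
  invLen v + invLen (u * v⁻¹) = invLen u

instance {n : ℕ} (v u : Equiv.Perm (Fin n)) : Decidable (leR v u) :=
  inferInstanceAs (Decidable (_ = _))

instance {n : ℕ} (v u : Equiv.Perm (Fin n)) : Decidable (leL v u) :=
  inferInstanceAs (Decidable (_ = _))

/-- The permutation 3142 (one-indexed) as a permutation of `Fin 4`. -/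
def perm3142 : Equiv.Perm (Fin 4) :=
  ⟨![2, 0, 3, 1], ![1, 3, 0, 2], by decide, by decide⟩

/-- The permutation 2413 (one-indexed) as a permutation of `Fin 4`. -/
def perm2413 : Equiv.Perm (Fin 4) :=
  ⟨![1, 3, 0, 2], ![2, 0, 3, 1], by decide, by decide⟩

/-- `w` contains the pattern `σ`. -/
def ContainsPattern {n k : ℕ} (w : Equiv.Perm (Fin n)) (σ : Equiv.Perm (Fin k)) : Prop :=
  ∃ f : Fin k → Fin n, StrictMono f ∧ ∀ a b : Fin k, σ a < σ b ↔ w (f a) < w (f b)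

/-- A permutation is separable if it avoids 3142 and 2413. -/
def Separable {n : ℕ} (w : Equiv.Perm (Fin n)) : Prop :=
  ¬ ContainsPattern w perm3142 ∧ ¬ ContainsPattern w perm2413

/-- The longest element `w₀` of `S_n`, `i ↦ n+1-i` (one-indexed). -/
def w0 (n : ℕ) : Equiv.Perm (Fin n) :=
  ⟨Fin.rev, Fin.rev, Fin.rev_rev, Fin.rev_rev⟩


/-- The adjacent transpositions `s_i = (i, i+1)` (one-indexed) for `i ∈ J`,
as permutations of `Fin n` (zero-indexed: swapping positions `i-1` and `i`). -/
def adjTranspositions (n : ℕ) (J : Set ℕ) : Set (Equiv.Perm (Fin n)) :=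
  {σ | ∃ i ∈ J, ∃ (h1 : i - 1 < n) (h2 : i < n),
    σ = Equiv.swap (⟨i - 1, h1⟩ : Fin n) (⟨i, h2⟩ : Fin n)}




open Classical in
noncomputable def beta (J : Set ℕ) (a : ℕ) : ℕ :=
  ((Finset.Icc 1 a).filter fun k => k ∉ J).card

theorem beta_mono (J : Set ℕ) {a b : ℕ} (h : a ≤ b) : beta J a ≤ beta J b := by
  classical
  apply Finset.card_le_card
  intro k hk
  simp only [Finset.mem_filter, Finset.mem_Icc] at *
  exact ⟨⟨hk.1.1, le_trans hk.1.2 h⟩, hk.2⟩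

theorem lt_of_beta_lt (J : Set ℕ) {a b : ℕ} (h : beta J a < beta J b) : a < b := by
  by_contra hc
  exact absurd (beta_mono J (not_lt.1 hc)) (by omega)

theorem beta_succ_mem (J : Set ℕ) {a : ℕ} (h : a + 1 ∈ J) : beta J (a + 1) = beta J a := by
  classical
  unfold beta
  congr 1
  apply Finset.ext
  intro k
  simp only [Finset.mem_filter, Finset.mem_Icc]
  constructor
  · rintro ⟨⟨h1, h2⟩, h3⟩
    refine ⟨⟨h1, ?_⟩, h3⟩
    rcases Nat.lt_or_ge k (a+1) with h4 | h4
    · omega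
    · exact absurd (by omega : k = a + 1) (by rintro rfl; exact h3 h)
  · rintro ⟨⟨h1, h2⟩, h3⟩; exact ⟨⟨h1, by omega⟩, h3⟩

theorem beta_succ_notmem (J : Set ℕ) {a : ℕ} (h : a + 1 ∉ J) :
    beta J (a + 1) = beta J a + 1 := by
  classical
  unfold beta
  rw [show Finset.Icc 1 (a+1) = insert (a+1) (Finset.Icc 1 a) by
      apply Finset.ext; intro k; simp [Finset.mem_Icc]; omega]
  rw [Finset.filter_insert, if_pos h, Finset.card_insert_of_notMem]
  simp [Finset.mem_Icc]


theorem swap_val {n : ℕ} (p q x : Fin n) (hpq : (p:ℕ)+1 = q) :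
    ((Equiv.swap p q x : Fin n) : ℕ) =
      if (x:ℕ) = (p:ℕ) then (q:ℕ) else if (x:ℕ) = (q:ℕ) then (p:ℕ) else (x:ℕ) := by
  rcases eq_or_ne x p with rfl|h1
  · rw [Equiv.swap_apply_left, if_pos rfl]
  · rcases eq_or_ne x q with rfl|h2
    · rw [Equiv.swap_apply_right, if_neg (by omega), if_pos rfl]
    · rw [Equiv.swap_apply_of_ne_of_ne h1 h2,
        if_neg (fun h => h1 (Fin.ext h)), if_neg (fun h => h2 (Fin.ext h))]

theorem swap_adj_lt {n : ℕ} {p q a b : Fin n} (hpq : (p:ℕ)+1 = q) (hab : a < b)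
    (hne : ¬(a = p ∧ b = q)) : Equiv.swap p q a < Equiv.swap p q b := by
  have hne' : ¬((a:ℕ) = (p:ℕ) ∧ (b:ℕ) = (q:ℕ)) := by
    rintro ⟨h1, h2⟩; exact hne ⟨Fin.ext h1, Fin.ext h2⟩
  rw [Fin.lt_def] at hab ⊢
  rw [swap_val p q a hpq, swap_val p q b hpq]
  split_ifs <;> omega
theorem invLen_mul_swap {n : ℕ} (u : Equiv.Perm (Fin n)) {p q : Fin n}
    (hpq : (p:ℕ)+1 = q) (hd : u q < u p) :
    invLen (u * Equiv.swap p q) + 1 = invLen u := by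
  classical
  set s := Equiv.swap p q with hs
  have hss : ∀ a, s (s a) = a := fun a => Equiv.swap_apply_self p q a
  have hkey : invLen (u * s) =
      ((Finset.univ.filter fun x : Fin n × Fin n =>
        x.1 < x.2 ∧ u x.2 < u x.1).erase (p, q)).card := by
    apply Finset.card_bij (fun x _ => (s x.1, s x.2))
    · rintro ⟨a, b⟩ hx
      change (a, b) ∈ Finset.univ.filter (fun x : Fin n × Fin n => x.1 < x.2 ∧ (u * s) x.2 < (u * s) x.1) at hx
      rw [Finset.mem_filter] at hx
      simp only [Finset.mem_filter, Finset.mem_univ, true_and, Equiv.Perm.mul_apply] at hx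
      obtain ⟨hab, hinv⟩ := hx
      have hne : ¬(a = p ∧ b = q) := by
        rintro ⟨rfl, rfl⟩
        rw [Equiv.swap_apply_right, Equiv.swap_apply_left] at hinv
        exact absurd hd (not_lt.2 (le_of_lt hinv))
      refine Finset.mem_erase.2 ⟨?_, ?_⟩
      · rintro h
        have h1 : s a = p := congrArg Prod.fst h
        have h2 : s b = q := congrArg Prod.snd h
        have : a = s p := by rw [← h1, hss]
        have hb : b = s q := by rw [← h2, hss]
        rw [Equiv.swap_apply_left] at this
        rw [Equiv.swap_apply_right] at hb
        subst this hb
        rw [Fin.lt_def] at hab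
        omega
      · simp only [Finset.mem_filter, Finset.mem_univ, true_and]
        exact ⟨swap_adj_lt hpq hab hne, hinv⟩
    · rintro ⟨a, b⟩ _ ⟨c, d⟩ _ h
      have h1 : s a = s c := congrArg Prod.fst h
      have h2 : s b = s d := congrArg Prod.snd h
      have := s.injective h1
      have := s.injective h2
      simp_all
    · rintro ⟨c, d⟩ hy
      obtain ⟨hne, hy⟩ := Finset.mem_erase.1 hy
      simp only [Finset.mem_filter, Finset.mem_univ, true_and] at hy
      obtain ⟨hcd, hinv⟩ := hy
      have hne2 : ¬(c = p ∧ d = q) := by rintro ⟨rfl, rfl⟩; exact hne rfl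
      refine ⟨(s c, s d), ?_, by simp [hss]⟩
      show (s c, s d) ∈ Finset.univ.filter (fun x : Fin n × Fin n => x.1 < x.2 ∧ (u * s) x.2 < (u * s) x.1)
      rw [Finset.mem_filter]
      simp only [Finset.mem_filter, Finset.mem_univ, true_and, Equiv.Perm.mul_apply, hss]
      exact ⟨swap_adj_lt hpq hcd hne2, hinv⟩
  have hmem : (p, q) ∈ (Finset.univ.filter fun x : Fin n × Fin n =>
      x.1 < x.2 ∧ u x.2 < u x.1) := by
    simp only [Finset.mem_filter, Finset.mem_univ, true_and]
    exact ⟨by rw [Fin.lt_def]; omega, hd⟩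
  rw [show invLen (u * s) = _ from hkey, Finset.card_erase_of_mem hmem]
  have := Finset.card_pos.2 ⟨_, hmem⟩
  unfold invLen
  omega

theorem eq_one_of_no_descent {n : ℕ} (u : Equiv.Perm (Fin n))
    (h : ∀ p q : Fin n, (p:ℕ)+1 = q → u p < u q) : u = 1 := by
  have hsm : StrictMono u := by
    cases n with
    | zero => intro a; exact absurd a.2 (by omega)
    | succ m =>
      rw [Fin.strictMono_iff_lt_succ]
      intro i
      exact h _ _ (by simp [Fin.coe_castSucc, Fin.val_succ])
  have he : StrictMono.orderIsoOfSurjective u hsm u.surjective = OrderIso.refl (Fin n) :=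
    Subsingleton.elim _ _
  ext a
  have h2 : u a = (StrictMono.orderIsoOfSurjective u hsm u.surjective) a := rfl
  rw [he] at h2
  have h3 : u a = a := h2
  simp [h3]

theorem exists_descent {n : ℕ} (u : Equiv.Perm (Fin n)) (hu : u ≠ 1) :
    ∃ p q : Fin n, (p:ℕ)+1 = q ∧ u q < u p := by
  by_contra hc
  push_neg at hc
  apply hu
  apply eq_one_of_no_descent
  intro p q hpq
  have := hc p q hpq
  have hne : u p ≠ u q := fun h => by
    have := u.injective h
    subst this
    omega
  omega




theorem beta_swap {n : ℕ} (J : Set ℕ) {p q : Fin n} (hpq : (p:ℕ)+1 = q) (hq : (q:ℕ) ∈ J)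
    (a : Fin n) : beta J ((Equiv.swap p q a : Fin n) : ℕ) = beta J (a:ℕ) := by
  rw [swap_val p q a hpq]
  have h : beta J ((p:ℕ)+1) = beta J (p:ℕ) := beta_succ_mem J (by rwa [hpq])
  rw [hpq] at h
  split_ifs with h1 h2
  · rw [h1]; exact h
  · rw [h2]; exact h.symm
  · rfl

noncomputable def BW {n : ℕ} (J : Set ℕ) : Subgroup (Equiv.Perm (Fin n)) where
  carrier := {u | ∀ a : Fin n, beta J ((u a : Fin n) : ℕ) = beta J (a : ℕ)}
  mul_mem' := by intro u v hu hv a; rw [Equiv.Perm.mul_apply, hu, hv]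
  one_mem' := by intro a; rfl
  inv_mem' := by
    intro u hu a
    have := hu (u⁻¹ a)
    rw [Equiv.Perm.coe_inv, Equiv.apply_symm_apply] at this
    exact this.symm

theorem closure_le_BW {n : ℕ} (J : Set ℕ) (hJ : ∀ i ∈ J, 1 ≤ i ∧ i ≤ n - 1) :
    Subgroup.closure (adjTranspositions n J) ≤ BW (n := n) J := by
  rw [Subgroup.closure_le]
  rintro σ ⟨i, hiJ, h1, h2, rfl⟩
  intro a
  have h1i : 1 ≤ i := (hJ i hiJ).1
  exact beta_swap J (p := ⟨i-1, h1⟩) (q := ⟨i, h2⟩) (by simp; omega) (by simpa) a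

theorem BW_le_closure_aux {n : ℕ} (J : Set ℕ) : ∀ N (u : Equiv.Perm (Fin n)), invLen u ≤ N →
    (∀ a : Fin n, beta J ((u a : Fin n) : ℕ) = beta J (a : ℕ)) →
    u ∈ Subgroup.closure (adjTranspositions n J) := by
  intro N
  induction N with
  | zero =>
    intro u hlen hbw
    rcases eq_or_ne u 1 with rfl | hne
    · exact Subgroup.one_mem _
    · obtain ⟨p, q, hpq, hd⟩ := exists_descent u hne
      have := invLen_mul_swap u hpq hd
      omega
  | succ N ih =>
    intro u hlen hbw
    rcases eq_or_ne u 1 with rfl | hne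
    · exact Subgroup.one_mem _
    · obtain ⟨p, q, hpq, hd⟩ := exists_descent u hne
      have hqJ : (q:ℕ) ∈ J := by
        by_contra hq
        have hβ : beta J ((q:ℕ)) = beta J (p:ℕ) + 1 := by
          rw [← hpq]; exact beta_succ_notmem J (by rwa [hpq])
        have h1 := hbw p
        have h2 := hbw q
        have : ((u p : Fin n):ℕ) < ((u q : Fin n):ℕ) := by
          have : beta J ((u p : Fin n):ℕ) < beta J ((u q : Fin n):ℕ) := by omega
          exact lt_of_beta_lt J this
        rw [Fin.lt_def] at hd
        omega
      set s := Equiv.swap p q with hs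
      have hgen : s ∈ adjTranspositions n J := by
        have hp' : (⟨(q:ℕ)-1, by omega⟩ : Fin n) = p := Fin.ext (by simp; omega)
        exact ⟨(q:ℕ), hqJ, by omega, q.2, by rw [hs, hp']⟩
      have hlen2 : invLen (u * s) ≤ N := by
        rw [hs]
        have := invLen_mul_swap u hpq hd
        omega
      have hbw2 : ∀ a : Fin n, beta J (((u * s) a : Fin n) : ℕ) = beta J (a : ℕ) := by
        intro a
        rw [Equiv.Perm.mul_apply, hbw (s a), hs, beta_swap J hpq hqJ]
      have hmem := ih (u * s) hlen2 hbw2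
      have : u = (u * s) * s := by
        rw [mul_assoc, hs, Equiv.swap_mul_self, mul_one]
      rw [this]
      exact Subgroup.mul_mem _ hmem (Subgroup.subset_closure hgen)

theorem closure_eq_BW {n : ℕ} (J : Set ℕ) (hJ : ∀ i ∈ J, 1 ≤ i ∧ i ≤ n - 1)
    (u : Equiv.Perm (Fin n)) :
    u ∈ Subgroup.closure (adjTranspositions n J) ↔
      ∀ a : Fin n, beta J ((u a : Fin n) : ℕ) = beta J (a : ℕ) := by
  constructor
  · intro h; exact closure_le_BW J hJ h
  · intro h; exact BW_le_closure_aux J (invLen u) u le_rfl h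


theorem xor_count {α : Type*} [DecidableEq α] (P : Finset α) (A B : α → Prop)
    [DecidablePred A] [DecidablePred B] :
    (P.filter fun p => (A p ∧ ¬ B p) ∨ (¬ A p ∧ B p)).card
      + 2 * (P.filter fun p => A p ∧ B p).card
      = (P.filter A).card + (P.filter B).card := by
  classical
  have h1 : (P.filter fun p => A p ∧ B p).card + (P.filter fun p => A p ∧ ¬ B p).card
      = (P.filter A).card := by
    rw [← Finset.filter_filter, ← Finset.filter_filter]
    exact Finset.card_filter_add_card_filter_not (fun p => B p)
  have h2 : (P.filter fun p => B p ∧ A p).card + (P.filter fun p => B p ∧ ¬ A p).card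
      = (P.filter B).card := by
    rw [← Finset.filter_filter, ← Finset.filter_filter]
    exact Finset.card_filter_add_card_filter_not (fun p => A p)
  have h3 : (P.filter fun p => B p ∧ A p) = (P.filter fun p => A p ∧ B p) := by
    apply Finset.filter_congr; intro p _; exact and_comm
  have h4 : (P.filter fun p => (A p ∧ ¬ B p) ∨ (¬ A p ∧ B p)).card
      = (P.filter fun p => A p ∧ ¬ B p).card + (P.filter fun p => ¬ A p ∧ B p).card := by
    rw [Finset.filter_or]
    apply Finset.card_union_of_disjoint
    rw [Finset.disjoint_left]
    intro p hp hq
    simp only [Finset.mem_filter] at hp hq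
    exact hq.2.1 hp.2.1
  have h5 : (P.filter fun p => B p ∧ ¬ A p) = (P.filter fun p => ¬ A p ∧ B p) := by
    apply Finset.filter_congr; intro p _; exact and_comm
  rw [h3, h5] at h2
  omega

theorem inv_subset_of_add {n : ℕ} (x y : Equiv.Perm (Fin n))
    (h : invLen (x * y) = invLen x + invLen y) :
    ∀ a b : Fin n, a < b → y b < y a → (x * y) b < (x * y) a := by
  classical
  set P : Finset (Fin n × Fin n) := Finset.univ.filter fun p => p.1 < p.2 with hP
  set A : Fin n × Fin n → Prop := fun p => y p.2 < y p.1 with hA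
  set B : Fin n × Fin n → Prop := fun p =>
    (y p.1 < y p.2 ∧ x (y p.2) < x (y p.1)) ∨ (y p.2 < y p.1 ∧ x (y p.1) < x (y p.2)) with hB
  set C : Fin n × Fin n → Prop := fun p => x (y p.2) < x (y p.1) with hC
  have hylt : ∀ p ∈ P, y p.1 < y p.2 ∨ y p.2 < y p.1 := by
    intro p hp
    rcases lt_trichotomy (y p.1) (y p.2) with h'|h'|h'
    · exact Or.inl h'
    · exfalso
      have := y.injective h'
      simp only [hP, Finset.mem_filter, Finset.mem_univ, true_and] at hp
      rw [this] at hp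
      exact lt_irrefl _ hp
    · exact Or.inr h'
  have hxy : invLen (x * y) = (P.filter C).card := by
    rw [invLen, hP, Finset.filter_filter]
    try rfl
  have hy : invLen y = (P.filter A).card := by
    rw [invLen, hP, Finset.filter_filter]
    try rfl
  have hx : invLen x = (P.filter B).card := by
    rw [invLen]
    symm
    apply Finset.card_bij (fun p _ => if y p.1 < y p.2 then (y p.1, y p.2) else (y p.2, y p.1))
    · rintro ⟨a, b⟩ hp
      simp only [Finset.mem_filter, Finset.mem_univ, true_and, hP, hB] at hp ⊢
      obtain ⟨hab, hBp⟩ := hp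
      rcases hBp with ⟨h1, h2⟩ | ⟨h1, h2⟩
      · rw [if_pos h1]; exact ⟨h1, h2⟩
      · rw [if_neg (not_lt.2 (le_of_lt h1))]; exact ⟨h1, h2⟩
    · rintro ⟨a, b⟩ hp ⟨c, d⟩ hq heq
      simp only [hP, Finset.mem_filter, Finset.mem_univ, true_and] at hp hq
      have hab := hp.1; have hcd := hq.1
      split_ifs at heq with h1 h2 h2 <;>
        obtain ⟨e1, e2⟩ := Prod.ext_iff.1 heq <;>
        first
        | (have := y.injective e1; have := y.injective e2; subst_vars; rfl)
        | (have ha := y.injective e1; have hb := y.injective e2; subst_vars;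
           exact absurd (lt_trans hab hcd) (lt_irrefl _) )
    · rintro ⟨c, d⟩ hq
      simp only [Finset.mem_filter, Finset.mem_univ, true_and] at hq
      obtain ⟨hcd, hx'⟩ := hq
      rcases lt_trichotomy (y⁻¹ c) (y⁻¹ d) with h'|h'|h'
      · refine ⟨(y⁻¹ c, y⁻¹ d), ?_, ?_⟩
        · simp only [hP, hB, Finset.mem_filter, Finset.mem_univ, true_and,
            Equiv.Perm.coe_inv, Equiv.apply_symm_apply]
          exact ⟨h', Or.inl ⟨hcd, hx'⟩⟩
        · simp only [Equiv.Perm.coe_inv, Equiv.apply_symm_apply]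
          rw [if_pos hcd]
      · exfalso
        have : c = d := by
          have := congrArg y h'
          simpa [Equiv.Perm.coe_inv, Equiv.apply_symm_apply] using this
        rw [this] at hcd
        exact lt_irrefl _ hcd
      · refine ⟨(y⁻¹ d, y⁻¹ c), ?_, ?_⟩
        · simp only [hP, hB, Finset.mem_filter, Finset.mem_univ, true_and,
            Equiv.Perm.coe_inv, Equiv.apply_symm_apply]
          exact ⟨h', Or.inr ⟨hcd, hx'⟩⟩
        · simp only [Equiv.Perm.coe_inv, Equiv.apply_symm_apply]
          rw [if_neg (not_lt.2 (le_of_lt hcd))]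
  have hCiff : ∀ p ∈ P, C p ↔ ((A p ∧ ¬ B p) ∨ (¬ A p ∧ B p)) := by
    intro p hp
    rcases hylt p hp with h1 | h1
    · -- ¬ A p
      have hnA : ¬ A p := not_lt.2 (le_of_lt h1)
      constructor
      · intro hc; exact Or.inr ⟨hnA, Or.inl ⟨h1, hc⟩⟩
      · rintro (⟨ha, _⟩ | ⟨_, (⟨_, h2⟩ | ⟨h2, _⟩)⟩)
        · exact absurd ha hnA
        · exact h2
        · exact absurd h2 hnA
    · -- A p
      have hA' : A p := h1
      have hne : x (y p.1) ≠ x (y p.2) := fun hh => by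
        have := y.injective (x.injective hh)
        rw [this] at h1; exact lt_irrefl _ h1
      constructor
      · intro hc
        refine Or.inl ⟨hA', ?_⟩
        rintro (⟨h2, _⟩ | ⟨_, h3⟩)
        · exact absurd h1 (not_lt.2 (le_of_lt h2))
        · exact absurd hc (not_lt.2 (le_of_lt h3))
      · rintro (⟨_, hnB⟩ | ⟨hna, _⟩)
        · rcases lt_trichotomy (x (y p.2)) (x (y p.1)) with h'|h'|h'
          · exact h'
          · exact absurd h'.symm hne
          · exact absurd (Or.inr ⟨h1, h'⟩) hnB
        · exact absurd hA' hna
  have hCcard : (P.filter C).card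
      = (P.filter fun p => (A p ∧ ¬ B p) ∨ (¬ A p ∧ B p)).card := by
    congr 1
    apply Finset.filter_congr
    intro p hp
    simp only [hCiff p hp]
  have hmain := xor_count P A B
  have hAB : (P.filter fun p => A p ∧ B p).card = 0 := by
    rw [hxy, hx, hy] at h
    omega
  rw [Finset.card_eq_zero] at hAB
  intro a b hab hyab
  have hnab : ¬ (A (a, b) ∧ B (a, b)) := by
    intro hcon
    have : (a, b) ∈ P.filter fun p => A p ∧ B p := by
      simp only [hP, Finset.mem_filter, Finset.mem_univ, true_and]
      exact ⟨hab, hcon⟩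
    rw [hAB] at this
    exact absurd this (Finset.notMem_empty _)
  have hA' : A (a, b) := hyab
  have hnB : ¬ B (a, b) := fun hb => hnab ⟨hA', hb⟩
  simp only [Equiv.Perm.mul_apply]
  have hne : x (y a) ≠ x (y b) := fun hh => by
    have := y.injective (x.injective hh)
    rw [this] at hyab; exact lt_irrefl _ hyab
  rcases lt_trichotomy (x (y b)) (x (y a)) with h'|h'|h'
  · exact h'
  · exact absurd h'.symm hne
  · exact absurd (Or.inr ⟨hyab, h'⟩) hnB


theorem blockwise_of_no_cross {n : ℕ} (J : Set ℕ) (y : Equiv.Perm (Fin n))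
    (h : ∀ a b : Fin n, a < b → y b < y a → beta J (a:ℕ) = beta J (b:ℕ)) :
    ∀ a : Fin n, beta J ((y a : Fin n):ℕ) = beta J (a:ℕ) := by
  classical
  have hcr : ∀ a b : Fin n, a < b → beta J (a:ℕ) ≠ beta J (b:ℕ) → y a < y b := by
    intro a b hab hne
    rcases lt_trichotomy (y a) (y b) with h'|h'|h'
    · exact h'
    · exact absurd (y.injective h') (fun hh => by rw [hh] at hab; exact lt_irrefl _ hab)
    · exact absurd (h a b hab h') hne
  intro a
  by_contra hne
  rcases Nat.lt_or_ge (beta J ((y a : Fin n):ℕ)) (beta J (a:ℕ)) with hlt | hge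
  · set E : Finset (Fin n) := Finset.univ.filter fun b => beta J (b:ℕ) < beta J (a:ℕ) with hE
    have hmaps : ∀ b ∈ insert a E, y b ∈ E := by
      intro b hb
      rcases Finset.mem_insert.1 hb with rfl | hbE
      · simp only [hE, Finset.mem_filter, Finset.mem_univ, true_and]; exact hlt
      · simp only [hE, Finset.mem_filter, Finset.mem_univ, true_and] at hbE ⊢
        have hba : b < a := by
          rw [Fin.lt_def]; exact lt_of_beta_lt J hbE
        have : y b < y a := hcr b a hba (by omega)
        have h2 : beta J ((y b : Fin n):ℕ) ≤ beta J ((y a : Fin n):ℕ) :=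
          beta_mono J (le_of_lt (Fin.lt_def.1 this))
        omega
    have hcard := Finset.card_le_card_of_injOn y hmaps (y.injective.injOn)
    have hanot : a ∉ E := by
      simp only [hE, Finset.mem_filter, Finset.mem_univ, true_and]
      omega
    rw [Finset.card_insert_of_notMem hanot] at hcard
    omega
  · have hgt : beta J (a:ℕ) < beta J ((y a : Fin n):ℕ) := by omega
    set E : Finset (Fin n) := Finset.univ.filter fun b => beta J (a:ℕ) < beta J (b:ℕ) with hE
    have hmaps : ∀ b ∈ insert a E, y b ∈ E := by
      intro b hb
      rcases Finset.mem_insert.1 hb with rfl | hbE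
      · simp only [hE, Finset.mem_filter, Finset.mem_univ, true_and]; exact hgt
      · simp only [hE, Finset.mem_filter, Finset.mem_univ, true_and] at hbE ⊢
        have hab : a < b := by
          rw [Fin.lt_def]; exact lt_of_beta_lt J hbE
        have : y a < y b := hcr a b hab (by omega)
        have h2 : beta J ((y a : Fin n):ℕ) ≤ beta J ((y b : Fin n):ℕ) :=
          beta_mono J (le_of_lt (Fin.lt_def.1 this))
        omega
    have hcard := Finset.card_le_card_of_injOn y hmaps (y.injective.injOn)
    have hanot : a ∉ E := by
      simp only [hE, Finset.mem_filter, Finset.mem_univ, true_and]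
      omega
    rw [Finset.card_insert_of_notMem hanot] at hcard
    omega


/-- a splitting of `S_n` restricts to a splitting of every
parabolic subgroup `W_J`. -/
theorem stmt_6 {n : ℕ} (X Y : Set (Equiv.Perm (Fin n)))
    (hadd : ∀ x ∈ X, ∀ y ∈ Y, invLen (x * y) = invLen x + invLen y)
    (hbij : Function.Bijective
      (fun p : X × Y => (p.1 : Equiv.Perm (Fin n)) * (p.2 : Equiv.Perm (Fin n))))
    (J : Set ℕ) (hJ : ∀ i ∈ J, 1 ≤ i ∧ i ≤ n - 1)
    (WJ : Set (Equiv.Perm (Fin n)))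
    (hWJ : WJ = ↑(Subgroup.closure (adjTranspositions n J))) :
    (∀ x ∈ X ∩ WJ, ∀ y ∈ Y ∩ WJ, invLen (x * y) = invLen x + invLen y) ∧
    Set.BijOn (fun p : Equiv.Perm (Fin n) × Equiv.Perm (Fin n) => p.1 * p.2)
      ((X ∩ WJ) ×ˢ (Y ∩ WJ)) WJ := by
  classical
  subst hWJ
  have hch : ∀ u : Equiv.Perm (Fin n),
      u ∈ (↑(Subgroup.closure (adjTranspositions n J)) : Set (Equiv.Perm (Fin n))) ↔
      ∀ a : Fin n, beta J ((u a : Fin n):ℕ) = beta J (a:ℕ) := by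
    intro u
    rw [SetLike.mem_coe]
    exact closure_eq_BW J hJ u
  constructor
  · intro x hx y hy; exact hadd x hx.1 y hy.1
  · refine ⟨?_, ?_, ?_⟩
    · rintro ⟨x, y⟩ ⟨⟨hxX, hxW⟩, hyY, hyW⟩
      simp only
      rw [SetLike.mem_coe] at hxW hyW ⊢
      exact Subgroup.mul_mem _ hxW hyW
    · rintro ⟨x1, y1⟩ ⟨⟨hx1, _⟩, hy1, _⟩ ⟨x2, y2⟩ ⟨⟨hx2, _⟩, hy2, _⟩ heq
      have h0 := hbij.injective (a₁ := (⟨x1, hx1⟩, ⟨y1, hy1⟩)) (a₂ := (⟨x2, hx2⟩, ⟨y2, hy2⟩)) heq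
      obtain ⟨h1, h2⟩ := Prod.ext_iff.1 h0
      rw [Subtype.ext_iff] at h1 h2
      exact Prod.ext h1 h2
    · intro w hw
      obtain ⟨⟨⟨x, hxX⟩, ⟨y, hyY⟩⟩, hxyw⟩ := hbij.surjective w
      simp only at hxyw
      have hwb := (hch w).1 hw
      have hwinv : ∀ a b : Fin n, a < b → w b < w a → beta J (a:ℕ) = beta J (b:ℕ) := by
        intro a b hab hinv
        have hle : beta J (a:ℕ) ≤ beta J (b:ℕ) := beta_mono J (le_of_lt (Fin.lt_def.1 hab))
        by_contra hne
        have h3 : beta J ((w a : Fin n):ℕ) < beta J ((w b : Fin n):ℕ) := by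
          rw [hwb a, hwb b]; omega
        have h4 := lt_of_beta_lt J h3
        rw [Fin.lt_def] at hinv
        omega
      have hsub := inv_subset_of_add x y (hadd x hxX y hyY)
      have hyb : ∀ a : Fin n, beta J ((y a : Fin n):ℕ) = beta J (a:ℕ) := by
        apply blockwise_of_no_cross
        intro a b hab hinv
        apply hwinv a b hab
        rw [← hxyw]
        exact hsub a b hab hinv
      have hyW : y ∈ Subgroup.closure (adjTranspositions n J) := (closure_eq_BW J hJ y).2 hyb
      have hwW : w ∈ Subgroup.closure (adjTranspositions n J) := hw
      have hxW : x ∈ Subgroup.closure (adjTranspositions n J) := by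
        have hx' : x = w * y⁻¹ := by rw [← hxyw]; group
        rw [hx']
        exact Subgroup.mul_mem _ hwW (Subgroup.inv_mem _ hyW)
      exact ⟨(x, y), ⟨⟨hxX, hxW⟩, hyY, hyW⟩, hxyw⟩


end SepPaper
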